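/- Let r̂ > 0 and θ > 0 and f(x) = 1/(1 + e^{-θ(x - r̂)}) with f(0) = y₀. The chord from (0, y₀) to any point (x₁, f(x₁)) with x₁ the unique point in (r̂, ∞) where the chord is tangent to f satisfies: the piecewise function g(x) = min{f(0) + slope·x, 1} is concave on [0, ∞) and g(x) ≥ f(x) for all x ≥ 0, provided slope·x₁ + y₀ = f(x₁) and slope = f'(x₁). -/

import Mathlib

private lemma sig_hasDeriv (θ rhat : ℝ) (x : ℝ) :
    HasDerivAt (fun x => 1 / (1 + Real.exp (-θ * (x - rhat))))
      (θ * Real.exp (-θ * (x - rhat)) / (1 + Real.exp (-θ * (x - rhat))) ^ 2) x := by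
  have hden : (0:ℝ) < 1 + Real.exp (-θ * (x - rhat)) := by positivity
  have h1 : HasDerivAt (fun x : ℝ => -θ * (x - rhat)) (-θ) x := by
    simpa using ((hasDerivAt_id x).sub_const rhat).const_mul (-θ)
  have h2 : HasDerivAt (fun x : ℝ => 1 + Real.exp (-θ * (x - rhat)))
      (Real.exp (-θ * (x - rhat)) * (-θ)) x := (h1.exp).const_add 1
  have h3 : HasDerivAt (fun x : ℝ => (1 + Real.exp (-θ * (x - rhat)))⁻¹)
      (-(Real.exp (-θ * (x - rhat)) * (-θ)) / (1 + Real.exp (-θ * (x - rhat))) ^ 2) x :=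
    h2.inv hden.ne'
  have hfun : (fun x : ℝ => 1 / (1 + Real.exp (-θ * (x - rhat))))
      = fun x : ℝ => (1 + Real.exp (-θ * (x - rhat)))⁻¹ := by
    funext y; rw [one_div]
  rw [hfun]
  convert h3 using 1
  ring

theorem concave_envelope_majorizes (θ rhat : ℝ) (hθ : 0 < θ) (hrhat : 0 < rhat)
    (f : ℝ → ℝ) (hf : f = fun x => 1 / (1 + Real.exp (-θ * (x - rhat))))
    (x₁ slope : ℝ) (hx₁ : rhat < x₁)
    (hslope : slope = deriv f x₁)
    (htangent : f x₁ - f 0 = slope * x₁)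
    (g : ℝ → ℝ) (hg : g = fun x => min (f 0 + slope * x) 1) :
    ConcaveOn ℝ (Set.Ici (0 : ℝ)) g ∧ ∀ x : ℝ, 0 ≤ x → f x ≤ g x := by
  have hdiff : ∀ x, DifferentiableAt ℝ f x := by
    intro x; rw [hf]; exact (sig_hasDeriv θ rhat x).differentiableAt
  have hderiv : ∀ x, deriv f x
      = θ * Real.exp (-θ * (x - rhat)) / (1 + Real.exp (-θ * (x - rhat))) ^ 2 := by
    intro x; rw [hf]; exact (sig_hasDeriv θ rhat x).deriv
  -- monotone derivative on Iic rhat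
  have hmono : MonotoneOn (deriv f) (Set.Iic rhat) := by
    intro x hx y hy hxy
    rw [hderiv, hderiv]
    set Ex := Real.exp (-θ * (x - rhat)) with hEx
    set Ey := Real.exp (-θ * (y - rhat)) with hEy
    have hExpos : 0 < Ex := Real.exp_pos _
    have hEypos : 0 < Ey := Real.exp_pos _
    have h1 : Ey ≤ Ex := Real.exp_le_exp.2 (by nlinarith)
    have h2 : 1 ≤ Ey := Real.one_le_exp (by simp only [Set.mem_Iic] at hy; nlinarith)
    have hprod : 1 ≤ Ex * Ey := by nlinarith
    rw [div_le_div_iff₀ (by positivity) (by positivity)]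
    nlinarith [mul_nonneg (mul_nonneg hθ.le (sub_nonneg.2 h1)) (sub_nonneg.2 hprod)]
  -- antitone derivative on Ici rhat
  have hanti : AntitoneOn (deriv f) (Set.Ici rhat) := by
    intro x hx y hy hxy
    rw [hderiv, hderiv]
    set Ex := Real.exp (-θ * (x - rhat)) with hEx
    set Ey := Real.exp (-θ * (y - rhat)) with hEy
    have hExpos : 0 < Ex := Real.exp_pos _
    have hEypos : 0 < Ey := Real.exp_pos _
    have h1 : Ey ≤ Ex := Real.exp_le_exp.2 (by nlinarith)
    have h2 : Ex ≤ 1 := Real.exp_le_one_iff.2 (by simp only [Set.mem_Ici] at hx; nlinarith)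
    have hprod : Ex * Ey ≤ 1 := by nlinarith
    rw [div_le_div_iff₀ (by positivity) (by positivity)]
    nlinarith [mul_nonneg (mul_nonneg hθ.le (sub_nonneg.2 h1)) (sub_nonneg.2 hprod)]
  have hcont : ∀ s : Set ℝ, ContinuousOn f s := fun s x _ =>
    (hdiff x).continuousAt.continuousWithinAt
  have hconv : ConvexOn ℝ (Set.Iic rhat) f :=
    MonotoneOn.convexOn_of_deriv (convex_Iic rhat) (hcont _)
      (fun x _ => (hdiff x).differentiableWithinAt)
      (hmono.mono interior_subset)
  have hconc : ConcaveOn ℝ (Set.Ici rhat) f :=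
    AntitoneOn.concaveOn_of_deriv (convex_Ici rhat) (hcont _)
      (fun x _ => (hdiff x).differentiableWithinAt)
      (hanti.mono interior_subset)
  have hfx1 : f x₁ = f 0 + slope * x₁ := by linarith
  -- tangent line majorizes f on [rhat, ∞)
  have key1 : ∀ x, rhat ≤ x → f x ≤ f 0 + slope * x := by
    intro x hxr
    rcases lt_trichotomy x x₁ with h | h | h
    · have hle := hconc.deriv_le_slope (Set.mem_Ici.2 hxr) (Set.mem_Ici.2 hx₁.le) h (hdiff x₁)
      rw [slope_def_field, ← hslope, le_div_iff₀ (by linarith)] at hle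
      linarith
    · rw [h]; linarith
    · have hle := hconc.slope_le_deriv (Set.mem_Ici.2 hx₁.le) (Set.mem_Ici.2 hxr) h (hdiff x₁)
      rw [slope_def_field, ← hslope, div_le_iff₀ (by linarith)] at hle
      linarith
  -- tangent line majorizes f on [0, rhat]
  have key2 : ∀ x, 0 ≤ x → x ≤ rhat → f x ≤ f 0 + slope * x := by
    intro x hx0 hxr
    have hfr : f rhat ≤ f 0 + slope * rhat := key1 rhat le_rfl
    have ha : (0:ℝ) ≤ (rhat - x) / rhat := div_nonneg (by linarith) hrhat.le
    have hb : (0:ℝ) ≤ x / rhat := by positivity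
    have hab : (rhat - x) / rhat + x / rhat = 1 := by field_simp; ring
    have hcomb := hconv.2 (Set.mem_Iic.2 hrhat.le) (Set.mem_Iic.2 le_rfl) ha hb hab
    simp only [smul_eq_mul, mul_zero, zero_add] at hcomb
    have hxx : x / rhat * rhat = x := by field_simp
    rw [hxx] at hcomb
    have : (rhat - x) / rhat * f 0 + x / rhat * f rhat
        ≤ (rhat - x) / rhat * f 0 + x / rhat * (f 0 + slope * rhat) := by
      gcongr
    calc f x ≤ (rhat - x) / rhat * f 0 + x / rhat * f rhat := hcomb
      _ ≤ (rhat - x) / rhat * f 0 + x / rhat * (f 0 + slope * rhat) := this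
      _ = f 0 + slope * x := by field_simp; ring
  have hkey : ∀ x, 0 ≤ x → f x ≤ f 0 + slope * x := by
    intro x hx
    rcases le_or_gt x rhat with h | h
    · exact key2 x hx h
    · exact key1 x h.le
  have hflt1 : ∀ x, f x ≤ 1 := by
    intro x
    rw [hf]
    have : (0:ℝ) < 1 + Real.exp (-θ * (x - rhat)) := by positivity
    rw [div_le_one this]
    nlinarith [Real.exp_pos (-θ * (x - rhat))]
  constructor
  · rw [hg]
    refine ⟨convex_Ici 0, ?_⟩
    intro x _ y _ a b ha hb hab
    simp only [smul_eq_mul]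
    apply le_min
    · have h1 : a * min (f 0 + slope * x) 1 ≤ a * (f 0 + slope * x) :=
        mul_le_mul_of_nonneg_left (min_le_left _ _) ha
      have h2 : b * min (f 0 + slope * y) 1 ≤ b * (f 0 + slope * y) :=
        mul_le_mul_of_nonneg_left (min_le_left _ _) hb
      have : a * (f 0 + slope * x) + b * (f 0 + slope * y)
          = f 0 + slope * (a * x + b * y) := by linear_combination f 0 * hab
      linarith
    · have h1 : a * min (f 0 + slope * x) 1 ≤ a * 1 :=
        mul_le_mul_of_nonneg_left (min_le_right _ _) ha
      have h2 : b * min (f 0 + slope * y) 1 ≤ b * 1 :=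
        mul_le_mul_of_nonneg_left (min_le_right _ _) hb
      linarith
  · intro x hx
    rw [hg]
    exact le_min (hkey x hx) (hflt1 x)
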